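/- In a unital associative \mathbb{C}(q)-algebra, suppose elements a, b, c satisfy ab - qba = (q^{-1}-q)c and ca - qac = (q^{-1}-q)b. Then the Serre-type identity a^2 b - (q+q^{-1})\,a b a + b a^2 = -q^{-1}(q-q^{-1})^2\, b holds. -/
import Mathlib


/-- The formal variable `q`, as a generator of the field ℂ(q). -/
noncomputable def qgen : RatFunc ℂ := RatFunc.X

/-- In a unital associative ℂ(q)-algebra, if `ab - q·ba = (q⁻¹-q)·c` and
`ca - q·ac = (q⁻¹-q)·b`, then `a²b - (q+q⁻¹)·aba + ba² = -q⁻¹(q-q⁻¹)²·b`. -/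
theorem serre_type_identity {A : Type*} [Ring A] [Algebra (RatFunc ℂ) A]
    (a b c : A)
    (h1 : a * b - qgen • (b * a) = (qgen⁻¹ - qgen) • c)
    (h2 : c * a - qgen • (a * c) = (qgen⁻¹ - qgen) • b) :
    a * a * b - (qgen + qgen⁻¹) • (a * b * a) + b * (a * a)
      = (-qgen⁻¹ * (qgen - qgen⁻¹) ^ 2) • b := by
  have hq : qgen ≠ 0 := RatFunc.X_ne_zero
  set q : RatFunc ℂ := qgen with hqdef
  have hinv : q⁻¹ * q = 1 := inv_mul_cancel₀ hq
  -- left-multiplied relation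
  have e1 : a * a * b - q • (a * b * a) = (q⁻¹ - q) • (a * c) := by
    have h := congrArg (a * ·) h1
    simpa only [mul_sub, mul_smul_comm, ← mul_assoc] using h
  -- right-multiplied relation
  have e2 : a * b * a - q • (b * (a * a)) = (q⁻¹ - q) • (c * a) := by
    have h := congrArg (· * a) h1
    simpa only [sub_mul, smul_mul_assoc, mul_assoc] using h
  have e3 : c * a = (q⁻¹ - q) • b + q • (a * c) := by
    rw [sub_eq_iff_eq_add] at h2
    simpa [add_comm] using h2
  have key : a * a * b - (q + q⁻¹) • (a * b * a) + b * (a * a)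
      = (a * a * b - q • (a * b * a)) - q⁻¹ • (a * b * a - q • (b * (a * a))) := by
    rw [smul_sub, smul_smul, hinv, one_smul, add_smul]
    abel
  rw [key, e1, e2, e3]
  simp only [smul_add, smul_smul]
  have h0 : q⁻¹ * ((q⁻¹ - q) * q) = q⁻¹ - q := by
    linear_combination (q⁻¹ - q) * hinv
  rw [h0]
  have : (q⁻¹ - q) • (a * c) - ((q⁻¹ * ((q⁻¹ - q) * (q⁻¹ - q))) • b + (q⁻¹ - q) • (a * c))
      = (-(q⁻¹ * ((q⁻¹ - q) * (q⁻¹ - q)))) • b := by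
    rw [neg_smul]; abel
  rw [this]
  congr 1
  ring
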